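/- Let V be a finite-dimensional real inner product space and A : V → V an invertible linear map for which there exist constants 0 < m ≤ M with m‖v‖ ≤ ‖A v‖ ≤ M‖v‖ for all v ∈ V. Let E ⊆ V be a linear subspace, let E^⊥ denote its orthogonal complement, and let φ : E → E^⊥ be a linear map. Define ψ : A(E) → (A(E))^⊥ by ψ(u) = P_{(A(E))^⊥}(A(φ(A⁻¹u))) for u ∈ A(E), where P_{(A(E))^⊥} is the orthogonal projection of V onto (A(E))^⊥. Then (m/M)·‖φ‖ ≤ ‖ψ‖ ≤ (M/m)·‖φ‖, where ‖·‖ denotes the operator norm. -/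

import Mathlib

open Submodule

/-- Let `A : V ≃ V` be an invertible linear map with `m‖v‖ ≤ ‖A v‖ ≤ M‖v‖`, let `E` be a
subspace, `φ : E → E^⊥` linear, and let `ψ : A(E) → (A(E))^⊥` be defined by
`ψ u = P_{(A(E))^⊥}(A (φ (A⁻¹ u)))`.  Then `(m/M)‖φ‖ ≤ ‖ψ‖ ≤ (M/m)‖φ‖`. -/
theorem stmt4 {V : Type*} [NormedAddCommGroup V] [InnerProductSpace ℝ V]
    [FiniteDimensional ℝ V]
    (A : V ≃ₗ[ℝ] V) (m M : ℝ) (hm : 0 < m) (hmM : m ≤ M)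
    (hlow : ∀ v : V, m * ‖v‖ ≤ ‖A v‖) (hup : ∀ v : V, ‖A v‖ ≤ M * ‖v‖)
    (E : Submodule ℝ V) (φ : E →L[ℝ] Eᗮ)
    (ψ : (E.map (A : V →ₗ[ℝ] V)) →L[ℝ] (E.map (A : V →ₗ[ℝ] V))ᗮ)
    (hψ : ∀ (u : E.map (A : V →ₗ[ℝ] V)) (hu : A.symm (u : V) ∈ E),
      (ψ u : V) =
        (orthogonalProjection (E.map (A : V →ₗ[ℝ] V))ᗮ (A ((φ ⟨A.symm (u : V), hu⟩ : V))) : V)) :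
    (m / M) * ‖φ‖ ≤ ‖ψ‖ ∧ ‖ψ‖ ≤ (M / m) * ‖φ‖ := by
  have hM : 0 < M := lt_of_lt_of_le hm hmM
  have hmem : ∀ u : E.map (A : V →ₗ[ℝ] V), A.symm (u : V) ∈ E := by
    intro u
    obtain ⟨e, he, hFe⟩ := u.2
    have : A.symm (u : V) = e := by
      rw [← hFe]; exact A.symm_apply_apply e
    rw [this]; exact he
  have hψle : ‖ψ‖ ≤ (M / m) * ‖φ‖ := by
    apply ContinuousLinearMap.opNorm_le_bound
    · positivity
    intro u
    have hu := hmem u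
    have h1 : ‖(ψ u : V)‖ ≤ ‖(A ((φ ⟨A.symm (u : V), hu⟩ : V)))‖ := by
      rw [hψ u hu]
      calc ‖(orthogonalProjection (E.map (A : V →ₗ[ℝ] V))ᗮ
              (A ((φ ⟨A.symm (u : V), hu⟩ : V))) : V)‖
          ≤ 1 * ‖(A ((φ ⟨A.symm (u : V), hu⟩ : V)))‖ :=
            ContinuousLinearMap.le_of_opNorm_le _ (orthogonalProjection_norm_le _) _
        _ = _ := one_mul _
    have h2 : ‖(A ((φ ⟨A.symm (u : V), hu⟩ : V)))‖ ≤ M * (‖φ‖ * ‖(A.symm (u : V))‖) := by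
      calc ‖(A ((φ ⟨A.symm (u : V), hu⟩ : V)))‖ ≤ M * ‖((φ ⟨A.symm (u : V), hu⟩ : V))‖ :=
            hup _
        _ ≤ M * (‖φ‖ * ‖(A.symm (u : V))‖) := by
            apply mul_le_mul_of_nonneg_left _ hM.le
            exact φ.le_opNorm ⟨A.symm (u : V), hu⟩
    have h3 : ‖(A.symm (u : V))‖ ≤ ‖(u : V)‖ / m := by
      rw [le_div_iff₀ hm, mul_comm]
      calc m * ‖(A.symm (u : V))‖ ≤ ‖A (A.symm (u : V))‖ := hlow _
        _ = ‖(u : V)‖ := by rw [A.apply_symm_apply]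
    have hnu : ‖u‖ = ‖(u : V)‖ := rfl
    rw [hnu]
    calc ‖(ψ u : V)‖ ≤ M * (‖φ‖ * ‖(A.symm (u : V))‖) := h1.trans h2
      _ ≤ M * (‖φ‖ * (‖(u : V)‖ / m)) := by
          apply mul_le_mul_of_nonneg_left _ hM.le
          exact mul_le_mul_of_nonneg_left h3 (norm_nonneg φ)
      _ = M / m * ‖φ‖ * ‖(u : V)‖ := by ring
  refine ⟨?_, hψle⟩
  have hφle : ‖φ‖ ≤ (M / m) * ‖ψ‖ := by
    apply ContinuousLinearMap.opNorm_le_bound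
    · positivity
    intro e
    set u : E.map (A : V →ₗ[ℝ] V) := ⟨A (e : V), mem_map_of_mem e.2⟩ with hu_def
    have hu : A.symm (u : V) ∈ E := hmem u
    have he' : (⟨A.symm (u : V), hu⟩ : E) = e := by
      ext; exact A.symm_apply_apply (e : V)
    set x : V := A ((φ e : V)) with hx
    have hψu : (ψ u : V) = x - (orthogonalProjection (E.map (A : V →ₗ[ℝ] V)) x : V) := by
      rw [hψ u hu, he', ← starProjection_apply, starProjection_orthogonal_val, starProjection_apply]
    have hmemF : A.symm ((orthogonalProjection (E.map (A : V →ₗ[ℝ] V)) x : V)) ∈ E :=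
      hmem (orthogonalProjection (E.map (A : V →ₗ[ℝ] V)) x)
    have hAsymm : A.symm (ψ u : V) =
        (φ e : V) - A.symm ((orthogonalProjection (E.map (A : V →ₗ[ℝ] V)) x : V)) := by
      rw [hψu, map_sub, hx, A.symm_apply_apply]
    have hself : orthogonalProjection Eᗮ ((φ e : V)) = φ e :=
      orthogonalProjection_mem_subspace_eq_self (φ e)
    have hkey : (orthogonalProjection Eᗮ (A.symm (ψ u : V)) : V) = (φ e : V) := by
      have hz : orthogonalProjection Eᗮ
          (A.symm ((orthogonalProjection (E.map (A : V →ₗ[ℝ] V)) x : V))) = 0 :=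
        orthogonalProjectionOnto_apply_of_mem_orthogonal
          (E.le_orthogonal_orthogonal hmemF)
      rw [hAsymm, map_sub, hself, hz]
      simp
    have h1 : ‖(φ e : V)‖ ≤ ‖A.symm (ψ u : V)‖ := by
      rw [← hkey]
      calc ‖(orthogonalProjection Eᗮ (A.symm (ψ u : V)) : V)‖
          ≤ 1 * ‖A.symm (ψ u : V)‖ :=
            ContinuousLinearMap.le_of_opNorm_le _ (orthogonalProjection_norm_le _) _
        _ = _ := one_mul _
    have h2 : ‖A.symm (ψ u : V)‖ ≤ ‖(ψ u : V)‖ / m := by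
      rw [le_div_iff₀ hm, mul_comm]
      calc m * ‖A.symm (ψ u : V)‖ ≤ ‖A (A.symm (ψ u : V))‖ := hlow _
        _ = ‖(ψ u : V)‖ := by rw [A.apply_symm_apply]
    have h3 : ‖(ψ u : V)‖ ≤ ‖ψ‖ * (M * ‖(e : V)‖) := by
      calc ‖(ψ u : V)‖ ≤ ‖ψ‖ * ‖u‖ := ψ.le_opNorm u
        _ ≤ ‖ψ‖ * (M * ‖(e : V)‖) := by
            apply mul_le_mul_of_nonneg_left _ (norm_nonneg ψ)
            exact hup (e : V)
    calc ‖φ e‖ = ‖(φ e : V)‖ := rfl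
      _ ≤ ‖(ψ u : V)‖ / m := h1.trans h2
      _ ≤ (‖ψ‖ * (M * ‖(e : V)‖)) / m := by gcongr
      _ = M / m * ‖ψ‖ * ‖e‖ := by
          have : ‖(e : V)‖ = ‖e‖ := rfl
          rw [this]; ring
  rw [div_mul_eq_mul_div, div_le_iff₀ hM]
  calc m * ‖φ‖ ≤ m * ((M / m) * ‖ψ‖) := mul_le_mul_of_nonneg_left hφle hm.le
    _ = ‖ψ‖ * M := by field_simp
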